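/- Let f be a map from a finite domain D_f into Finset a such that f v = V v for every v ∈ D_f. Then α (next f) = α f if and only if α f = ⊥ (that is, if and only if D_f = ∅). -/
import Mathlib


/-- A map with finite domain `dom`, whose values are given by `toFun`. -/
structure FMap (α : Type*) (β : Type*) where
  dom : Finset α
  toFun : α → β

/-- The map `next f`, with domain `⋃ v ∈ D_f, f v` and values `V`. -/
def FMap.next {α : Type*} [DecidableEq α] (V : α → Finset α)
    (f : FMap α (Finset α)) : FMap α (Finset α) :=
  ⟨f.dom.biUnion f.toFun, V⟩

/-- `α f`: the supremum of the potential `γ` over the domain of `f` (⊥ for the empty domain). -/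
def FMap.alpha {α β : Type*} (γ : α → ℕ) (f : FMap α β) : WithBot ℕ :=
  f.dom.sup (fun v => (γ v : WithBot ℕ))


/-- **Corollary to Lemma 2.** Let `f` be a map from a finite domain `D_f`
into `Finset α` such that `f v = V v` for every `v ∈ D_f`.  Then `α (next f) = α f`
if and only if `α f = ⊥` (that is, if and only if `D_f = ∅`). -/
theorem alpha_next_eq_alpha_iff {α : Type*} [DecidableEq α]
    (V : α → Finset α) (γ : α → ℕ)
    (hγ : ∀ x, ∀ y ∈ V x, γ y < γ x)
    (f : FMap α (Finset α))
    (hf : ∀ v ∈ f.dom, f.toFun v = V v) :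
    (FMap.alpha γ (FMap.next V f) = FMap.alpha γ f ↔ FMap.alpha γ f = ⊥) ∧
      (FMap.alpha γ f = ⊥ ↔ f.dom = ∅) := by
  have hbot : FMap.alpha γ f = ⊥ ↔ f.dom = ∅ := by
    simp [FMap.alpha, Finset.sup_eq_bot_iff, Finset.eq_empty_iff_forall_notMem]
  refine ⟨⟨fun h => ?_, fun h => ?_⟩, hbot⟩
  · by_contra hne
    have hlt : FMap.alpha γ (FMap.next V f) < FMap.alpha γ f := by
      rw [FMap.alpha, Finset.sup_lt_iff (by simpa [bot_lt_iff_ne_bot] using hne)]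
      intro y hy
      simp only [FMap.next, Finset.mem_biUnion] at hy
      obtain ⟨v, hv, hyv⟩ := hy
      rw [hf v hv] at hyv
      calc ((γ y : ℕ) : WithBot ℕ) < (γ v : ℕ) := by
            exact_mod_cast hγ v y hyv
        _ ≤ FMap.alpha γ f := Finset.le_sup (f := fun v => (γ v : WithBot ℕ)) hv
    exact absurd h hlt.ne
  · have hd := hbot.1 h
    rw [h]
    simp [FMap.alpha, FMap.next, hd]
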